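/- Assume A is indecomposable and the Weyl group W is infinite. Let ω ∈ W be such that ℓ(ω^l) = |l|·ℓ(ω) for all l ∈ ℤ, and let α ∈ Δ₊. Then the sign of ω^k α is a monotonic function of k ∈ ℤ: either for all integers k ≤ l, ω^k α ∈ Δ₋ implies ω^l α ∈ Δ₋, or for all integers k ≤ l, ω^k α ∈ Δ₊ implies ω^l α ∈ Δ₊. -/

import Mathlib

open Matrix Filter Pointwise

namespace KacMoodyPaper

variable {n : ℕ}

/-- `A` is a generalized Cartan matrix. -/
def IsGCM (A : Matrix (Fin n) (Fin n) ℤ) : Prop :=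
  (∀ i, A i i = 2) ∧ (∀ i j, i ≠ j → A i j ≤ 0) ∧ (∀ i j, A i j = 0 ↔ A j i = 0)

/-- The simple reflection `s i` as a linear map: `s i v = v - (A *ᵥ v) i • e i`. -/
def sMap (A : Matrix (Fin n) (Fin n) ℤ) (i : Fin n) : (Fin n → ℤ) →ₗ[ℤ] (Fin n → ℤ) where
  toFun v := v - (A.mulVec v i) • Pi.single i 1
  map_add' x y := by
    simp only [Matrix.mulVec_add, Pi.add_apply, add_smul]
    abel
  map_smul' c x := by
    simp only [Matrix.mulVec_smul, Pi.smul_apply, smul_eq_mul, RingHom.id_apply, smul_sub,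
      smul_smul]

theorem sMap_involutive (A : Matrix (Fin n) (Fin n) ℤ) (i : Fin n) (h2 : A i i = 2)
    (v : Fin n → ℤ) : sMap A i (sMap A i v) = v := by
  have hAe : A.mulVec (Pi.single i 1) i = A i i := by
    simp [Matrix.mulVec_single]
  simp only [sMap, LinearMap.coe_mk, AddHom.coe_mk, Matrix.mulVec_sub, Matrix.mulVec_smul,
    Pi.sub_apply, Pi.smul_apply, hAe, h2, smul_eq_mul]
  ring_nf

/-- The simple reflection `s i` as a `ℤ`-linear automorphism of `ℤ^n`
(determined by `s i (e j) = e j - A i j • e i`). -/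
def s (A : Matrix (Fin n) (Fin n) ℤ) (h2 : ∀ i, A i i = 2) (i : Fin n) :
    (Fin n → ℤ) ≃ₗ[ℤ] (Fin n → ℤ) :=
  LinearEquiv.ofLinear (sMap A i) (sMap A i)
    (LinearMap.ext fun v => sMap_involutive A i (h2 i) v)
    (LinearMap.ext fun v => sMap_involutive A i (h2 i) v)

/-- The Coxeter element `w = s 1 ∘ s 2 ∘ ⋯ ∘ s n` (applying `s n` first). -/
def cox (A : Matrix (Fin n) (Fin n) ℤ) (h2 : ∀ i, A i i = 2) :
    (Fin n → ℤ) ≃ₗ[ℤ] (Fin n → ℤ) :=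
  (List.ofFn (fun i : Fin n => s A h2 i)).prod

/-- The Weyl group: the subgroup of `GL(n, ℤ)` generated by the simple reflections. -/
def weyl (A : Matrix (Fin n) (Fin n) ℤ) (h2 : ∀ i, A i i = 2) :
    Subgroup ((Fin n → ℤ) ≃ₗ[ℤ] (Fin n → ℤ)) :=
  Subgroup.closure (Set.range (s A h2))

/-- The word length of `ω` with respect to the generators `s 1, …, s n`. -/
noncomputable def len (A : Matrix (Fin n) (Fin n) ℤ) (h2 : ∀ i, A i i = 2)
    (ω : (Fin n → ℤ) ≃ₗ[ℤ] (Fin n → ℤ)) : ℕ :=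
  sInf {k | ∃ f : Fin k → Fin n, ω = (List.ofFn (fun j => s A h2 (f j))).prod}

/-- `v ∈ ℤ^n` is positive: nonzero with all coordinates `≥ 0`. -/
def IsPos (v : Fin n → ℤ) : Prop := v ≠ 0 ∧ ∀ i, 0 ≤ v i

/-- The height of a vector: the sum of its coordinates. -/
def ht (v : Fin n → ℤ) : ℤ := ∑ i, v i

/-- The graph `Γ` on `{1, …, n}` with an edge between `i ≠ j` iff `A i j ≠ 0`. -/
def gcmGraph (A : Matrix (Fin n) (Fin n) ℤ) (hsym : ∀ i j, A i j = 0 ↔ A j i = 0) :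
    SimpleGraph (Fin n) where
  Adj i j := i ≠ j ∧ A i j ≠ 0
  symm := by
    constructor
    rintro i j ⟨hij, h⟩
    exact ⟨hij.symm, fun h0 => h ((hsym i j).mpr h0)⟩
  loopless := by constructor; rintro i ⟨h, -⟩; exact h rfl

/-- `A` is indecomposable: the graph `Γ` is connected. -/
def Indecomposable (A : Matrix (Fin n) (Fin n) ℤ) (hsym : ∀ i j, A i j = 0 ↔ A j i = 0) :
    Prop :=
  (gcmGraph A hsym).Connected

/-- `A` is of indefinite type: there is `u > 0` (componentwise) with `A·u < 0` componentwise. -/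
def IndefiniteType (A : Matrix (Fin n) (Fin n) ℤ) : Prop :=
  ∃ u : Fin n → ℤ, (∀ i, 0 < u i) ∧ ∀ i, (A.mulVec u) i < 0

/-- The fundamental set `K`: positive vectors with connected support and `A·v ≤ 0`. -/
def fundK (A : Matrix (Fin n) (Fin n) ℤ) (hsym : ∀ i j, A i j = 0 ↔ A j i = 0) :
    Set (Fin n → ℤ) :=
  {v | IsPos v ∧ ((gcmGraph A hsym).induce {i | v i ≠ 0}).Connected ∧
    ∀ i, (A.mulVec v) i ≤ 0}

/-- The real roots: the `W`-orbits of the standard basis vectors. -/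
def realRoots (A : Matrix (Fin n) (Fin n) ℤ) (h2 : ∀ i, A i i = 2) : Set (Fin n → ℤ) :=
  {v | ∃ g ∈ weyl A h2, ∃ i : Fin n, v = g (Pi.single i 1)}

/-- The positive imaginary roots: the `W`-orbit of the fundamental set `K`. -/
def posImRoots (A : Matrix (Fin n) (Fin n) ℤ) (h2 : ∀ i, A i i = 2)
    (hsym : ∀ i j, A i j = 0 ↔ A j i = 0) : Set (Fin n → ℤ) :=
  {v | ∃ g ∈ weyl A h2, ∃ k ∈ fundK A hsym, v = g k}

/-- The set of roots `Δ`. -/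
def roots (A : Matrix (Fin n) (Fin n) ℤ) (h2 : ∀ i, A i i = 2)
    (hsym : ∀ i j, A i j = 0 ↔ A j i = 0) : Set (Fin n → ℤ) :=
  realRoots A h2 ∪ posImRoots A h2 hsym ∪ (-(posImRoots A h2 hsym))

/-- The set of positive roots `Δ₊`. -/
def posRoots (A : Matrix (Fin n) (Fin n) ℤ) (h2 : ∀ i, A i i = 2)
    (hsym : ∀ i j, A i j = 0 ↔ A j i = 0) : Set (Fin n → ℤ) :=
  {v ∈ roots A h2 hsym | IsPos v}

/-- The set of negative roots `Δ₋ = -Δ₊`. -/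
def negRoots (A : Matrix (Fin n) (Fin n) ℤ) (h2 : ∀ i, A i i = 2)
    (hsym : ∀ i j, A i j = 0 ↔ A j i = 0) : Set (Fin n → ℤ) :=
  -(posRoots A h2 hsym)

/-! ### Auxiliary infrastructure -/

section Infra

variable (A : Matrix (Fin n) (Fin n) ℤ) (h2 : ∀ i, A i i = 2)

lemma s_apply (i : Fin n) (v : Fin n → ℤ) :
    s A h2 i v = v - (A.mulVec v i) • Pi.single i 1 := rfl

lemma equiv_mul_apply (f g : (Fin n → ℤ) ≃ₗ[ℤ] (Fin n → ℤ)) (v : Fin n → ℤ) :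
    (f * g) v = f (g v) := rfl

lemma s_s (i : Fin n) (v : Fin n → ℤ) : s A h2 i (s A h2 i v) = v :=
  sMap_involutive A i (h2 i) v

lemma s_mul_self (i : Fin n) : s A h2 i * s A h2 i = 1 :=
  LinearEquiv.ext fun v => s_s A h2 i v

lemma s_inv (i : Fin n) : (s A h2 i)⁻¹ = s A h2 i :=
  inv_eq_of_mul_eq_one_left (s_mul_self A h2 i)

lemma s_mem (i : Fin n) : s A h2 i ∈ weyl A h2 :=
  Subgroup.subset_closure (Set.mem_range_self i)

/-- product of a word -/
def wp (l : List (Fin n)) : (Fin n → ℤ) ≃ₗ[ℤ] (Fin n → ℤ) := (l.map (s A h2)).prod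

@[simp] lemma wp_nil : wp A h2 [] = 1 := rfl

@[simp] lemma wp_cons (i : Fin n) (l : List (Fin n)) :
    wp A h2 (i :: l) = s A h2 i * wp A h2 l := by simp [wp]

lemma wp_append (l₁ l₂ : List (Fin n)) :
    wp A h2 (l₁ ++ l₂) = wp A h2 l₁ * wp A h2 l₂ := by simp [wp]

lemma wp_singleton (i : Fin n) : wp A h2 [i] = s A h2 i := by simp

lemma wp_mem (l : List (Fin n)) : wp A h2 l ∈ weyl A h2 := by
  induction l with
  | nil => exact Subgroup.one_mem _
  | cons a l ih => rw [wp_cons]; exact Subgroup.mul_mem _ (s_mem A h2 a) ih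

lemma wp_reverse (l : List (Fin n)) : wp A h2 l.reverse = (wp A h2 l)⁻¹ := by
  induction l with
  | nil => simp
  | cons a l ih =>
    rw [List.reverse_cons, wp_append, ih, wp_singleton, wp_cons, _root_.mul_inv_rev, s_inv]

lemma exists_word (w : (Fin n → ℤ) ≃ₗ[ℤ] (Fin n → ℤ)) (hw : w ∈ weyl A h2) :
    ∃ l : List (Fin n), w = wp A h2 l := by
  induction hw using Subgroup.closure_induction with
  | mem x hx =>
    obtain ⟨i, rfl⟩ := hx
    exact ⟨[i], (wp_singleton A h2 i).symm⟩
  | one => exact ⟨[], rfl⟩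
  | mul x y hx hy ihx ihy =>
    obtain ⟨l₁, rfl⟩ := ihx; obtain ⟨l₂, rfl⟩ := ihy
    exact ⟨l₁ ++ l₂, (wp_append A h2 l₁ l₂).symm⟩
  | inv x hx ihx =>
    obtain ⟨l, rfl⟩ := ihx
    exact ⟨l.reverse, (wp_reverse A h2 l).symm⟩

lemma mem_lenSet_iff (w : (Fin n → ℤ) ≃ₗ[ℤ] (Fin n → ℤ)) (k : ℕ) :
    (∃ f : Fin k → Fin n, w = (List.ofFn (fun j => s A h2 (f j))).prod) ↔
      (∃ l : List (Fin n), l.length = k ∧ w = wp A h2 l) := by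
  constructor
  · rintro ⟨f, rfl⟩
    refine ⟨List.ofFn f, by simp, ?_⟩
    rw [wp, List.map_ofFn]
    rfl
  · rintro ⟨l, rfl, rfl⟩
    refine ⟨l.get, ?_⟩
    have h : l.map (s A h2) = List.ofFn (fun j => s A h2 (l.get j)) := by
      conv_lhs => rw [← List.ofFn_get l]
      rw [List.map_ofFn]
      rfl
    rw [wp, h]

lemma len_le_word (w : (Fin n → ℤ) ≃ₗ[ℤ] (Fin n → ℤ)) (l : List (Fin n))
    (h : w = wp A h2 l) : len A h2 w ≤ l.length := by
  apply Nat.sInf_le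
  exact (mem_lenSet_iff A h2 w l.length).2 ⟨l, rfl, h⟩

lemma exists_min_word (w : (Fin n → ℤ) ≃ₗ[ℤ] (Fin n → ℤ)) (hw : w ∈ weyl A h2) :
    ∃ l : List (Fin n), l.length = len A h2 w ∧ w = wp A h2 l := by
  obtain ⟨l₀, hl₀⟩ := exists_word A h2 w hw
  have hne : {k | ∃ f : Fin k → Fin n,
      w = (List.ofFn (fun j => s A h2 (f j))).prod}.Nonempty :=
    ⟨l₀.length, (mem_lenSet_iff A h2 w l₀.length).2 ⟨l₀, rfl, hl₀⟩⟩
  have := Nat.sInf_mem hne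
  exact (mem_lenSet_iff A h2 w (len A h2 w)).1 this

lemma len_one : len A h2 1 = 0 :=
  Nat.le_zero.1 (len_le_word A h2 1 [] rfl)

lemma eq_one_of_len_zero (w : (Fin n → ℤ) ≃ₗ[ℤ] (Fin n → ℤ)) (hw : w ∈ weyl A h2)
    (h : len A h2 w = 0) : w = 1 := by
  obtain ⟨l, hl, rfl⟩ := exists_min_word A h2 w hw
  rw [h] at hl
  rw [List.length_eq_zero_iff.1 hl, wp_nil]

lemma len_mul_le (w v : (Fin n → ℤ) ≃ₗ[ℤ] (Fin n → ℤ)) (hw : w ∈ weyl A h2)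
    (hv : v ∈ weyl A h2) : len A h2 (w * v) ≤ len A h2 w + len A h2 v := by
  obtain ⟨l₁, hl₁, rfl⟩ := exists_min_word A h2 w hw
  obtain ⟨l₂, hl₂, rfl⟩ := exists_min_word A h2 v hv
  calc len A h2 (wp A h2 l₁ * wp A h2 l₂) ≤ (l₁ ++ l₂).length :=
        len_le_word A h2 _ _ (wp_append A h2 l₁ l₂).symm
    _ = len A h2 (wp A h2 l₁) + len A h2 (wp A h2 l₂) := by simp [hl₁, hl₂]

end Infra
section Parity

variable (A : Matrix (Fin n) (Fin n) ℤ) (h2 : ∀ i, A i i = 2)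

/-- determinant homomorphism -/
noncomputable def detH : ((Fin n → ℤ) ≃ₗ[ℤ] (Fin n → ℤ)) →* ℤ :=
  LinearMap.det.comp LinearEquiv.automorphismGroup.toLinearMapMonoidHom

lemma sMap_eq_toLin' (i : Fin n) :
    sMap A i = Matrix.toLin' (1 + Matrix.replicateCol Unit (Pi.single i (1 : ℤ)) *
      Matrix.replicateRow Unit (fun m => -(A i m))) := by
  apply LinearMap.ext
  intro v
  funext k
  simp only [sMap, LinearMap.coe_mk, AddHom.coe_mk, Matrix.toLin'_apply, Pi.sub_apply,
    Pi.smul_apply, smul_eq_mul]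
  rw [Matrix.add_mulVec, Matrix.one_mulVec]
  simp only [Pi.add_apply, Matrix.mulVec, dotProduct, Matrix.mul_apply, Matrix.replicateCol_apply,
    Matrix.replicateRow_apply, Finset.univ_unique, Finset.sum_singleton]
  rcases eq_or_ne k i with rfl | hk
  · simp only [Matrix.mulVec, dotProduct, Pi.single_eq_same, mul_one]
    ring_nf
    simp [Matrix.mulVec, dotProduct, mul_comm]
    ring
  · simp [Pi.single_eq_of_ne hk]

lemma detH_s (i : Fin n) : detH (s A h2 i) = -1 := by
  have h1 : detH (s A h2 i) = LinearMap.det (sMap A i) := rfl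
  rw [h1, sMap_eq_toLin' A i, LinearMap.det_toLin']
  rw [Matrix.det_one_add_replicateCol_mul_replicateRow]
  simp [dotProduct, Pi.single_apply, h2 i]

end Parity
section Parity2

variable (A : Matrix (Fin n) (Fin n) ℤ) (h2 : ∀ i, A i i = 2)

lemma detH_wp (l : List (Fin n)) : detH (wp A h2 l) = (-1 : ℤ) ^ l.length := by
  induction l with
  | nil => simp [wp]
  | cons a l ih =>
    rw [wp_cons, _root_.map_mul, ih, detH_s A h2 a, List.length_cons, pow_succ]
    ring

lemma detH_len (w : (Fin n → ℤ) ≃ₗ[ℤ] (Fin n → ℤ)) (hw : w ∈ weyl A h2) :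
    detH w = (-1 : ℤ) ^ len A h2 w := by
  obtain ⟨l, hl, rfl⟩ := exists_min_word A h2 w hw
  rw [detH_wp, hl]

lemma len_mul_s_ne (w : (Fin n → ℤ) ≃ₗ[ℤ] (Fin n → ℤ)) (hw : w ∈ weyl A h2) (i : Fin n) :
    len A h2 (w * s A h2 i) ≠ len A h2 w := by
  intro h
  have h1 : detH (w * s A h2 i) = (-1 : ℤ) ^ len A h2 (w * s A h2 i) :=
    detH_len A h2 _ (Subgroup.mul_mem _ hw (s_mem A h2 i))
  rw [_root_.map_mul, detH_s A h2 i, detH_len A h2 w hw, h] at h1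
  have h2' : ((-1 : ℤ) ^ len A h2 w) * ((-1) ^ len A h2 w) = -(((-1 : ℤ) ^ len A h2 w) *
      ((-1) ^ len A h2 w)) := by
    nth_rewrite 2 [← h1]; ring
  rw [← pow_add] at h2'
  have := (neg_one_pow_eq_one_iff_even (by norm_num : (-1 : ℤ) ≠ 1)).2
    (Even.add_self (len A h2 w))
  omega

lemma len_mul_s (w : (Fin n → ℤ) ≃ₗ[ℤ] (Fin n → ℤ)) (hw : w ∈ weyl A h2) (i : Fin n) :
    len A h2 (w * s A h2 i) = len A h2 w + 1 ∨
      len A h2 w = len A h2 (w * s A h2 i) + 1 := by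
  have h1 : len A h2 (w * s A h2 i) ≤ len A h2 w + 1 := by
    have := len_mul_le A h2 w (s A h2 i) hw (s_mem A h2 i)
    have h2' := len_le_word A h2 (s A h2 i) [i] (wp_singleton A h2 i).symm
    simp only [List.length_singleton] at h2'
    omega
  have h2'' : len A h2 w ≤ len A h2 (w * s A h2 i) + 1 := by
    have e : w = (w * s A h2 i) * s A h2 i := by
      rw [mul_assoc, s_mul_self, mul_one]
    have := len_mul_le A h2 (w * s A h2 i) (s A h2 i)
      (Subgroup.mul_mem _ hw (s_mem A h2 i)) (s_mem A h2 i)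
    have h3 := len_le_word A h2 (s A h2 i) [i] (wp_singleton A h2 i).symm
    simp only [List.length_singleton] at h3
    calc len A h2 w = len A h2 ((w * s A h2 i) * s A h2 i) := by rw [← e]
      _ ≤ len A h2 (w * s A h2 i) + len A h2 (s A h2 i) := this
      _ ≤ len A h2 (w * s A h2 i) + 1 := by omega
  have := len_mul_s_ne A h2 w hw i
  omega

lemma exists_peel (w : (Fin n → ℤ) ≃ₗ[ℤ] (Fin n → ℤ)) (hw : w ∈ weyl A h2)
    (h : 0 < len A h2 w) :
    ∃ (u : (Fin n → ℤ) ≃ₗ[ℤ] (Fin n → ℤ)) (i : Fin n),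
      u ∈ weyl A h2 ∧ w = u * s A h2 i ∧ len A h2 u + 1 = len A h2 w := by
  obtain ⟨l, hl, rfl⟩ := exists_min_word A h2 w hw
  rcases l.eq_nil_or_concat with rfl | ⟨l₁, q, rfl⟩
  · rw [wp_nil, len_one] at h; exact absurd h (lt_irrefl 0)
  · rw [List.concat_eq_append] at hl h ⊢
    refine ⟨wp A h2 l₁, q, wp_mem A h2 l₁, by rw [wp_append, wp_singleton], ?_⟩
    have h1 : len A h2 (wp A h2 l₁) ≤ l₁.length := len_le_word A h2 _ _ rfl
    have h2' : (l₁ ++ [q]).length = l₁.length + 1 := by simp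
    have h3 : len A h2 (wp A h2 (l₁ ++ [q])) ≤ len A h2 (wp A h2 l₁) + 1 := by
      have := len_mul_s A h2 (wp A h2 l₁) (wp_mem A h2 l₁) q
      rw [wp_append, wp_singleton]
      omega
    omega

end Parity2
section Rank2

variable (A : Matrix (Fin n) (Fin n) ℤ) (h2 : ∀ i, A i i = 2) (i j : Fin n)

/-- The rank-2 subgroup generated by `s i` and `s j`. -/
def pairW : Subgroup ((Fin n → ℤ) ≃ₗ[ℤ] (Fin n → ℤ)) :=
  Subgroup.closure {s A h2 i, s A h2 j}

/-- length with respect to the two generators `s i`, `s j` -/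
noncomputable def len2 (v : (Fin n → ℤ) ≃ₗ[ℤ] (Fin n → ℤ)) : ℕ :=
  sInf {k | ∃ l : List (Fin n), l.length = k ∧ (∀ x ∈ l, x = i ∨ x = j) ∧ v = wp A h2 l}

lemma pairW_le_weyl : pairW A h2 i j ≤ weyl A h2 := by
  rw [pairW, Subgroup.closure_le]
  rintro x (rfl | rfl)
  · exact s_mem A h2 i
  · exact s_mem A h2 j

lemma exists_pair_word (v : (Fin n → ℤ) ≃ₗ[ℤ] (Fin n → ℤ)) (hv : v ∈ pairW A h2 i j) :
    ∃ l : List (Fin n), (∀ x ∈ l, x = i ∨ x = j) ∧ v = wp A h2 l := by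
  induction hv using Subgroup.closure_induction with
  | mem x hx =>
    rcases hx with rfl | rfl
    · exact ⟨[i], by simp, (wp_singleton A h2 i).symm⟩
    · exact ⟨[j], by simp, (wp_singleton A h2 j).symm⟩
  | one => exact ⟨[], by simp, rfl⟩
  | mul x y hx hy ihx ihy =>
    obtain ⟨l₁, hl₁, rfl⟩ := ihx; obtain ⟨l₂, hl₂, rfl⟩ := ihy
    refine ⟨l₁ ++ l₂, ?_, (wp_append A h2 l₁ l₂).symm⟩
    intro x hx
    rcases List.mem_append.1 hx with h | h
    · exact hl₁ x h
    · exact hl₂ x h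
  | inv x hx ihx =>
    obtain ⟨l, hl, rfl⟩ := ihx
    exact ⟨l.reverse, fun x hx => hl x (List.mem_reverse.1 hx), (wp_reverse A h2 l).symm⟩

lemma len2_le_word (v : (Fin n → ℤ) ≃ₗ[ℤ] (Fin n → ℤ)) (l : List (Fin n))
    (hl : ∀ x ∈ l, x = i ∨ x = j) (h : v = wp A h2 l) : len2 A h2 i j v ≤ l.length :=
  Nat.sInf_le ⟨l, rfl, hl, h⟩

lemma exists_min_word2 (v : (Fin n → ℤ) ≃ₗ[ℤ] (Fin n → ℤ)) (hv : v ∈ pairW A h2 i j) :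
    ∃ l : List (Fin n), l.length = len2 A h2 i j v ∧ (∀ x ∈ l, x = i ∨ x = j) ∧
      v = wp A h2 l := by
  obtain ⟨l₀, hl₀, hv₀⟩ := exists_pair_word A h2 i j v hv
  have hne : {k | ∃ l : List (Fin n), l.length = k ∧ (∀ x ∈ l, x = i ∨ x = j) ∧
      v = wp A h2 l}.Nonempty := ⟨l₀.length, l₀, rfl, hl₀, hv₀⟩
  exact Nat.sInf_mem hne

lemma len_le_len2 (v : (Fin n → ℤ) ≃ₗ[ℤ] (Fin n → ℤ)) (hv : v ∈ pairW A h2 i j) :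
    len A h2 v ≤ len2 A h2 i j v := by
  obtain ⟨l, hl, -, rfl⟩ := exists_min_word2 A h2 i j v hv
  rw [← hl]
  exact len_le_word A h2 _ l rfl

lemma len2_eq_zero (v : (Fin n → ℤ) ≃ₗ[ℤ] (Fin n → ℤ)) (hv : v ∈ pairW A h2 i j)
    (h : len2 A h2 i j v = 0) : v = 1 := by
  obtain ⟨l, hl, -, rfl⟩ := exists_min_word2 A h2 i j v hv
  rw [h, List.length_eq_zero_iff] at hl
  rw [hl, wp_nil]

lemma len2_mul_s_le (v : (Fin n → ℤ) ≃ₗ[ℤ] (Fin n → ℤ)) (hv : v ∈ pairW A h2 i j)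
    (k : Fin n) (hk : k = i ∨ k = j) :
    len2 A h2 i j (v * s A h2 k) ≤ len2 A h2 i j v + 1 := by
  obtain ⟨l, hl, hlet, rfl⟩ := exists_min_word2 A h2 i j v hv
  have : wp A h2 l * s A h2 k = wp A h2 (l ++ [k]) := by
    rw [wp_append, wp_singleton]
  calc len2 A h2 i j (wp A h2 l * s A h2 k) ≤ (l ++ [k]).length := by
        apply len2_le_word A h2 i j _ _ _ this
        intro x hx
        rcases List.mem_append.1 hx with h | h
        · exact hlet x h
        · simp at h; rw [h]; exact hk
    _ = len2 A h2 i j (wp A h2 l) + 1 := by simp [hl]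

lemma len2_s_mul_le (v : (Fin n → ℤ) ≃ₗ[ℤ] (Fin n → ℤ)) (hv : v ∈ pairW A h2 i j)
    (k : Fin n) (hk : k = i ∨ k = j) :
    len2 A h2 i j (s A h2 k * v) ≤ len2 A h2 i j v + 1 := by
  obtain ⟨l, hl, hlet, rfl⟩ := exists_min_word2 A h2 i j v hv
  calc len2 A h2 i j (s A h2 k * wp A h2 l) ≤ (k :: l).length := by
        apply len2_le_word A h2 i j _ _ _ (wp_cons A h2 k l).symm
        intro x hx
        rcases List.mem_cons.1 hx with h | h
        · rw [h]; exact hk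
        · exact hlet x h
    _ = len2 A h2 i j (wp A h2 l) + 1 := by simp [hl]

lemma s_mem_pairW (k : Fin n) (hk : k = i ∨ k = j) : s A h2 k ∈ pairW A h2 i j := by
  apply Subgroup.subset_closure
  rcases hk with rfl | rfl
  · exact Set.mem_insert _ _
  · exact Set.mem_insert_iff.2 (Or.inr rfl)

/-- alternating word ending (on the right) with letter `i` -/
def listA : ℕ → List (Fin n)
  | 0 => []
  | r+1 => (if r % 2 = 0 then i else j) :: listA r

/-- alternating word ending (on the right) with letter `j` -/
def listB : ℕ → List (Fin n)
  | 0 => []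
  | r+1 => (if r % 2 = 0 then j else i) :: listB r

lemma listA_letters : ∀ r, ∀ x ∈ listA i j r, x = i ∨ x = j := by
  intro r
  induction r with
  | zero => simp [listA]
  | succ r ih =>
    intro x hx
    rcases List.mem_cons.1 hx with h | h
    · rcases Nat.decEq (r % 2) 0 with h0 | h0 <;> simp [listA, h0] at h <;> [exact Or.inr h; exact Or.inl h]
    · exact ih x h

lemma listB_letters : ∀ r, ∀ x ∈ listB i j r, x = i ∨ x = j := by
  intro r
  induction r with
  | zero => simp [listB]
  | succ r ih =>
    intro x hx
    rcases List.mem_cons.1 hx with h | h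
    · rcases Nat.decEq (r % 2) 0 with h0 | h0 <;> simp [listB, h0] at h <;> [exact Or.inl h; exact Or.inr h]
    · exact ih x h

@[simp] lemma listA_length (r : ℕ) : (listA i j r).length = r := by
  induction r with
  | zero => rfl
  | succ r ih => simp [listA, ih]

@[simp] lemma listB_length (r : ℕ) : (listB i j r).length = r := by
  induction r with
  | zero => rfl
  | succ r ih => simp [listB, ih]

/-- alternating element ending in `s i` -/
noncomputable def altA (r : ℕ) : (Fin n → ℤ) ≃ₗ[ℤ] (Fin n → ℤ) := wp A h2 (listA i j r)

/-- alternating element ending in `s j` -/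
noncomputable def altB (r : ℕ) : (Fin n → ℤ) ≃ₗ[ℤ] (Fin n → ℤ) := wp A h2 (listB i j r)

lemma altA_zero : altA A h2 i j 0 = 1 := rfl
lemma altB_zero : altB A h2 i j 0 = 1 := rfl

lemma altA_succ (r : ℕ) :
    altA A h2 i j (r+1) = s A h2 (if r % 2 = 0 then i else j) * altA A h2 i j r := by
  rw [altA, listA, wp_cons]; rfl

lemma altB_succ (r : ℕ) :
    altB A h2 i j (r+1) = s A h2 (if r % 2 = 0 then j else i) * altB A h2 i j r := by
  rw [altB, listB, wp_cons]; rfl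

lemma altA_mem (r : ℕ) : altA A h2 i j r ∈ pairW A h2 i j := by
  induction r with
  | zero => exact Subgroup.one_mem _
  | succ r ih =>
    rw [altA_succ]
    refine Subgroup.mul_mem _ (s_mem_pairW A h2 i j _ ?_) ih
    split <;> simp

lemma altB_mem (r : ℕ) : altB A h2 i j r ∈ pairW A h2 i j := by
  induction r with
  | zero => exact Subgroup.one_mem _
  | succ r ih =>
    rw [altB_succ]
    refine Subgroup.mul_mem _ (s_mem_pairW A h2 i j _ ?_) ih
    split <;> simp

lemma len2_altA_le (r : ℕ) : len2 A h2 i j (altA A h2 i j r) ≤ r := by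
  have := len2_le_word A h2 i j (altA A h2 i j r) (listA i j r) (listA_letters i j r) rfl
  simpa using this

lemma len2_altB_le (r : ℕ) : len2 A h2 i j (altB A h2 i j r) ≤ r := by
  have := len2_le_word A h2 i j (altB A h2 i j r) (listB i j r) (listB_letters i j r) rfl
  simpa using this

lemma pick_eq (x y : Fin n) (r : ℕ) :
    (if r % 2 = 0 then x else y) = (if (r+1) % 2 = 0 then y else x) := by
  rcases Nat.mod_two_eq_zero_or_one r with h | h <;> simp [Nat.add_mod, h]

lemma alt_mul_succ (r : ℕ) : altB A h2 i j r * s A h2 i = altA A h2 i j (r+1) ∧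
    altA A h2 i j r * s A h2 j = altB A h2 i j (r+1) := by
  induction r with
  | zero =>
    rw [altA_zero, altB_zero, altA_succ, altB_succ, altA_zero, altB_zero]
    constructor <;> simp
  | succ r ih =>
    constructor
    · rw [altB_succ, mul_assoc, ih.1, altA_succ A h2 i j (r+1), ← pick_eq j i r]
    · rw [altA_succ, mul_assoc, ih.2, altB_succ A h2 i j (r+1), ← pick_eq i j r]

lemma altA_mul_s_i (r : ℕ) : altA A h2 i j (r+1) * s A h2 i = altB A h2 i j r := by
  rw [← (alt_mul_succ A h2 i j r).1, mul_assoc, s_mul_self, mul_one]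

lemma altB_mul_s_j (r : ℕ) : altB A h2 i j (r+1) * s A h2 j = altA A h2 i j r := by
  rw [← (alt_mul_succ A h2 i j r).2, mul_assoc, s_mul_self, mul_one]

lemma wp_pair_eq_alt (l : List (Fin n)) (hl : ∀ x ∈ l, x = i ∨ x = j) :
    ∃ t ≤ l.length, wp A h2 l = altA A h2 i j t ∨ wp A h2 l = altB A h2 i j t := by
  induction l with
  | nil => exact ⟨0, le_refl 0, Or.inl rfl⟩
  | cons x l ih =>
    obtain ⟨t, ht, hv⟩ := ih (fun y hy => hl y (List.mem_cons_of_mem x hy))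
    have hx := hl x List.mem_cons_self
    have hlen : (x :: l).length = l.length + 1 := rfl
    rw [wp_cons]
    rcases hv with hv | hv <;> rw [hv] <;> rcases hx with rfl | rfl
    · -- s i * altA t
      rcases Nat.mod_two_eq_zero_or_one t with hp | hp
      · refine ⟨t+1, by omega, Or.inl ?_⟩
        rw [altA_succ, if_pos hp]
      · obtain ⟨t', rfl⟩ : ∃ t', t = t' + 1 := ⟨t - 1, by omega⟩
        refine ⟨t', by omega, Or.inl ?_⟩
        have h' : t' % 2 = 0 := by omega
        rw [altA_succ, if_pos h', ← mul_assoc, s_mul_self, one_mul]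
    · -- s j * altA t
      rcases Nat.mod_two_eq_zero_or_one t with hp | hp
      · rcases Nat.eq_zero_or_pos t with rfl | htpos
        · refine ⟨1, by omega, Or.inr ?_⟩
          rw [altA_zero, mul_one, altB_succ, altB_zero, mul_one, if_pos rfl]
        · obtain ⟨t', rfl⟩ : ∃ t', t = t' + 1 := ⟨t - 1, by omega⟩
          refine ⟨t', by omega, Or.inl ?_⟩
          have h' : t' % 2 = 1 := by omega
          rw [altA_succ, if_neg (by omega), ← mul_assoc, s_mul_self, one_mul]
      · refine ⟨t+1, by omega, Or.inl ?_⟩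
        rw [altA_succ, if_neg (by omega)]
    · -- s i * altB t
      rcases Nat.mod_two_eq_zero_or_one t with hp | hp
      · rcases Nat.eq_zero_or_pos t with rfl | htpos
        · refine ⟨1, by omega, Or.inl ?_⟩
          rw [altB_zero, mul_one, altA_succ, altA_zero, mul_one, if_pos rfl]
        · obtain ⟨t', rfl⟩ : ∃ t', t = t' + 1 := ⟨t - 1, by omega⟩
          refine ⟨t', by omega, Or.inr ?_⟩
          have h' : t' % 2 = 1 := by omega
          rw [altB_succ, if_neg (by omega), ← mul_assoc, s_mul_self, one_mul]
      · refine ⟨t+1, by omega, Or.inr ?_⟩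
        rw [altB_succ, if_neg (by omega)]
    · -- s j * altB t
      rcases Nat.mod_two_eq_zero_or_one t with hp | hp
      · refine ⟨t+1, by omega, Or.inr ?_⟩
        rw [altB_succ, if_pos hp]
      · obtain ⟨t', rfl⟩ : ∃ t', t = t' + 1 := ⟨t - 1, by omega⟩
        refine ⟨t', by omega, Or.inr ?_⟩
        have h' : t' % 2 = 0 := by omega
        rw [altB_succ, if_pos h', ← mul_assoc, s_mul_self, one_mul]

lemma pair_rep (v : (Fin n → ℤ) ≃ₗ[ℤ] (Fin n → ℤ)) (hv : v ∈ pairW A h2 i j) :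
    v = altA A h2 i j (len2 A h2 i j v) ∨ v = altB A h2 i j (len2 A h2 i j v) := by
  obtain ⟨l, hl, hlet, rfl⟩ := exists_min_word2 A h2 i j v hv
  obtain ⟨t, ht, hv'⟩ := wp_pair_eq_alt A h2 i j l hlet
  rw [hl] at ht
  rcases hv' with hv' | hv'
  · have h1 : len2 A h2 i j (wp A h2 l) ≤ t := by rw [hv']; exact len2_altA_le A h2 i j t
    have : t = len2 A h2 i j (wp A h2 l) := by omega
    rw [← this]; exact Or.inl hv'
  · have h1 : len2 A h2 i j (wp A h2 l) ≤ t := by rw [hv']; exact len2_altB_le A h2 i j t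
    have : t = len2 A h2 i j (wp A h2 l) := by omega
    rw [← this]; exact Or.inr hv'
/-- coordinates of the alternating images of `e i` -/
def XY (a b : ℤ) : ℕ → ℤ × ℤ
  | 0 => (1, 0)
  | r+1 =>
    if r % 2 = 0 then ((XY a b r).1, b * (XY a b r).1 - (XY a b r).2)
    else (a * (XY a b r).2 - (XY a b r).1, (XY a b r).2)

lemma XY_pos_of_big (a b : ℤ) (ha : 1 ≤ a) (hb : 1 ≤ b) (hab : 4 ≤ a * b) (r : ℕ) :
    (0 ≤ (XY a b r).1 ∧ 0 ≤ (XY a b r).2) ∧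
      (r % 2 = 0 → 2 * (XY a b r).2 ≤ b * (XY a b r).1 ∧ a * (XY a b r).2 ≤ 2 * (XY a b r).1) ∧
      (r % 2 = 1 → 2 * (XY a b r).1 ≤ a * (XY a b r).2 ∧ b * (XY a b r).1 ≤ 2 * (XY a b r).2) := by
  induction r with
  | zero =>
    refine ⟨⟨by norm_num [XY], by norm_num [XY]⟩,
      fun _ => ⟨by norm_num [XY]; linarith, by norm_num [XY]⟩, fun h => by simp at h⟩
  | succ r ih =>
    obtain ⟨⟨hx, hy⟩, he, ho⟩ := ih
    rcases Nat.mod_two_eq_zero_or_one r with hp | hp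
    · obtain ⟨h1, h2'⟩ := he hp
      have hr1 : (r+1) % 2 = 1 := by omega
      refine ⟨⟨?_, ?_⟩, fun h => by omega, fun _ => ⟨?_, ?_⟩⟩ <;>
        simp only [XY, hp, if_true] <;> nlinarith
    · obtain ⟨h1, h2'⟩ := ho hp
      have hr1 : (r+1) % 2 = 0 := by omega
      have hne : ¬ (r % 2 = 0) := by omega
      refine ⟨⟨?_, ?_⟩, fun _ => ⟨?_, ?_⟩, fun h => by omega⟩ <;>
        simp only [XY, if_neg hne] <;> nlinarith

variable (hij : i ≠ j)

lemma s_apply_combo_i (x y : ℤ) :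
    s A h2 i (x • Pi.single i (1:ℤ) + y • Pi.single j 1) =
      ((-A i j) * y - x) • Pi.single i 1 + y • Pi.single j 1 := by
  have hm : A.mulVec (x • Pi.single i (1:ℤ) + y • Pi.single j 1) i
      = 2 * x + A i j * y := by
    simp only [Matrix.mulVec_add, Matrix.mulVec_smul, Pi.add_apply, Pi.smul_apply,
      smul_eq_mul, Matrix.mulVec_single_one, Matrix.col_apply, h2 i, mul_one]
    ring
  rw [s_apply, hm]
  module

lemma s_apply_combo_j (x y : ℤ) :
    s A h2 j (x • Pi.single i (1:ℤ) + y • Pi.single j 1) =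
      x • Pi.single i 1 + ((-A j i) * x - y) • Pi.single j 1 := by
  have hm : A.mulVec (x • Pi.single i (1:ℤ) + y • Pi.single j 1) j
      = A j i * x + 2 * y := by
    simp only [Matrix.mulVec_add, Matrix.mulVec_smul, Pi.add_apply, Pi.smul_apply,
      smul_eq_mul, Matrix.mulVec_single_one, Matrix.col_apply, h2 j, mul_one]
    ring
  rw [s_apply, hm]
  module

lemma altB_apply (r : ℕ) :
    altB A h2 i j r (Pi.single i (1:ℤ)) =
      (XY (-A i j) (-A j i) r).1 • Pi.single i 1 + (XY (-A i j) (-A j i) r).2 • Pi.single j 1 := by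
  induction r with
  | zero =>
    have h0 : altB A h2 i j 0 (Pi.single i (1:ℤ)) = Pi.single i (1:ℤ) := by
      rw [altB_zero]; rfl
    rw [h0]
    norm_num [XY]
  | succ r ih =>
    rw [altB_succ, equiv_mul_apply, ih]
    rcases Nat.mod_two_eq_zero_or_one r with hp | hp
    · rw [if_pos hp, s_apply_combo_j A h2 i j]
      simp only [XY, hp, if_true]
    · have hne : ¬ (r % 2 = 0) := by omega
      rw [if_neg hne, s_apply_combo_i A h2 i j]
      simp only [XY, if_neg hne]
lemma altA_two : altA A h2 i j 2 = s A h2 j * s A h2 i := by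
  norm_num [altA_succ, altA_zero]

lemma altB_two : altB A h2 i j 2 = s A h2 i * s A h2 j := by
  norm_num [altB_succ, altB_zero]

lemma altA_three : altA A h2 i j 3 = s A h2 i * (s A h2 j * s A h2 i) := by
  norm_num [altA_succ, altA_zero, mul_assoc]

lemma altB_three : altB A h2 i j 3 = s A h2 j * (s A h2 i * s A h2 j) := by
  norm_num [altB_succ, altB_zero, mul_assoc]

lemma altA_four : altA A h2 i j 4 = s A h2 j * (s A h2 i * (s A h2 j * s A h2 i)) := by
  norm_num [altA_succ, altA_zero, mul_assoc]

lemma altB_four : altB A h2 i j 4 = s A h2 i * (s A h2 j * (s A h2 i * s A h2 j)) := by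
  norm_num [altB_succ, altB_zero, mul_assoc]

lemma altA_six : altA A h2 i j 6 =
    s A h2 j * (s A h2 i * (s A h2 j * (s A h2 i * (s A h2 j * s A h2 i)))) := by
  norm_num [altA_succ, altA_zero, mul_assoc]

lemma altB_six : altB A h2 i j 6 =
    s A h2 i * (s A h2 j * (s A h2 i * (s A h2 j * (s A h2 i * s A h2 j)))) := by
  norm_num [altB_succ, altB_zero, mul_assoc]

lemma rel_m2 (hIJ : A i j = 0) (hJI : A j i = 0) :
    altA A h2 i j 2 = altB A h2 i j 2 := by
  rw [altA_two, altB_two]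
  apply LinearEquiv.ext
  intro v
  show s A h2 j (s A h2 i v) = s A h2 i (s A h2 j v)
  simp only [s_apply, Matrix.mulVec_sub, Matrix.mulVec_smul, Pi.sub_apply, Pi.smul_apply,
    smul_eq_mul, Matrix.mulVec_single_one, Matrix.col_apply, hIJ, hJI, h2 i, h2 j]
  match_scalars <;> ring

lemma rel_m3 (hIJ : A i j = -1) (hJI : A j i = -1) :
    altA A h2 i j 3 = altB A h2 i j 3 := by
  rw [altA_three, altB_three]
  apply LinearEquiv.ext
  intro v
  show s A h2 i (s A h2 j (s A h2 i v)) = s A h2 j (s A h2 i (s A h2 j v))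
  simp only [s_apply, Matrix.mulVec_sub, Matrix.mulVec_smul, Pi.sub_apply, Pi.smul_apply,
    smul_eq_mul, Matrix.mulVec_single_one, Matrix.col_apply, hIJ, hJI, h2 i, h2 j]
  match_scalars <;> ring

lemma rel_m4 (hIJ : A i j = -1) (hJI : A j i = -2) :
    altA A h2 i j 4 = altB A h2 i j 4 := by
  rw [altA_four, altB_four]
  apply LinearEquiv.ext
  intro v
  show s A h2 j (s A h2 i (s A h2 j (s A h2 i v))) =
    s A h2 i (s A h2 j (s A h2 i (s A h2 j v)))
  simp only [s_apply, Matrix.mulVec_sub, Matrix.mulVec_smul, Pi.sub_apply, Pi.smul_apply,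
    smul_eq_mul, Matrix.mulVec_single_one, Matrix.col_apply, hIJ, hJI, h2 i, h2 j]
  match_scalars <;> ring

lemma rel_m4' (hIJ : A i j = -2) (hJI : A j i = -1) :
    altA A h2 i j 4 = altB A h2 i j 4 := by
  rw [altA_four, altB_four]
  apply LinearEquiv.ext
  intro v
  show s A h2 j (s A h2 i (s A h2 j (s A h2 i v))) =
    s A h2 i (s A h2 j (s A h2 i (s A h2 j v)))
  simp only [s_apply, Matrix.mulVec_sub, Matrix.mulVec_smul, Pi.sub_apply, Pi.smul_apply,
    smul_eq_mul, Matrix.mulVec_single_one, Matrix.col_apply, hIJ, hJI, h2 i, h2 j]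
  match_scalars <;> ring

lemma rel_m6 (hIJ : A i j = -1) (hJI : A j i = -3) :
    altA A h2 i j 6 = altB A h2 i j 6 := by
  rw [altA_six, altB_six]
  apply LinearEquiv.ext
  intro v
  show s A h2 j (s A h2 i (s A h2 j (s A h2 i (s A h2 j (s A h2 i v))))) =
    s A h2 i (s A h2 j (s A h2 i (s A h2 j (s A h2 i (s A h2 j v)))))
  simp only [s_apply, Matrix.mulVec_sub, Matrix.mulVec_smul, Pi.sub_apply, Pi.smul_apply,
    smul_eq_mul, Matrix.mulVec_single_one, Matrix.col_apply, hIJ, hJI, h2 i, h2 j]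
  match_scalars <;> ring

lemma rel_m6' (hIJ : A i j = -3) (hJI : A j i = -1) :
    altA A h2 i j 6 = altB A h2 i j 6 := by
  rw [altA_six, altB_six]
  apply LinearEquiv.ext
  intro v
  show s A h2 j (s A h2 i (s A h2 j (s A h2 i (s A h2 j (s A h2 i v))))) =
    s A h2 i (s A h2 j (s A h2 i (s A h2 j (s A h2 i (s A h2 j v)))))
  simp only [s_apply, Matrix.mulVec_sub, Matrix.mulVec_smul, Pi.sub_apply, Pi.smul_apply,
    smul_eq_mul, Matrix.mulVec_single_one, Matrix.col_apply, hIJ, hJI, h2 i, h2 j]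
  match_scalars <;> ring
lemma altA_shift (m : ℕ) (hrel : altA A h2 i j m = altB A h2 i j m) :
    ∀ t, t ≤ m → altA A h2 i j (m + t) = altB A h2 i j (m - t) := by
  intro t
  induction t with
  | zero => simpa using hrel
  | succ t ih =>
    intro ht
    have ih' := ih (by omega)
    have hmt : m - t = (m - (t+1)) + 1 := by omega
    have e : m + (t+1) = (m + t) + 1 := by omega
    rw [e, altA_succ, ih', hmt, altB_succ]
    have hpar : (if (m + t) % 2 = 0 then i else j) =
        (if (m - (t+1)) % 2 = 0 then j else i) := by
      have h1 : (m + t) % 2 = 0 ↔ ¬ ((m - (t+1)) % 2 = 0) := by omega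
      rcases Nat.mod_two_eq_zero_or_one (m + t) with h | h
      · rw [if_pos h, if_neg (h1.1 h)]
      · have h2' : (m - (t+1)) % 2 = 0 := by omega
        rw [if_neg (by omega), if_pos h2']
    rw [hpar, ← mul_assoc]
    have := s_mul_self A h2 (if (m - (t+1)) % 2 = 0 then j else i)
    rw [this, one_mul]

lemma altA_period (m : ℕ) (hm : 1 ≤ m) (hrel : altA A h2 i j m = altB A h2 i j m) :
    ∀ t, altA A h2 i j (t + 2*m) = altA A h2 i j t := by
  intro t
  induction t with
  | zero =>
    have h := altA_shift A h2 i j m hrel m (le_refl m)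
    have e : m + m = 0 + 2*m := by ring
    rw [e] at h
    simpa [altA_zero, altB_zero] using h
  | succ t ih =>
    have e : t + 1 + 2*m = (t + 2*m) + 1 := by ring
    have hmod : (t + 2*m) % 2 = t % 2 := by omega
    rw [e, altA_succ, hmod, ih, ← altA_succ]

lemma len2_altA_le_m (m : ℕ) (hm : 1 ≤ m) (hrel : altA A h2 i j m = altB A h2 i j m) :
    ∀ t, len2 A h2 i j (altA A h2 i j t) ≤ m := by
  intro t
  induction t using Nat.strong_induction_on with
  | _ t ih =>
    by_cases h1 : t ≤ m
    · exact le_trans (len2_altA_le A h2 i j t) h1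
    · by_cases h2' : t < 2*m
      · have e : t = m + (t - m) := by omega
        rw [e, altA_shift A h2 i j m hrel (t - m) (by omega)]
        exact le_trans (len2_altB_le A h2 i j _) (by omega)
      · have e : t = (t - 2*m) + 2*m := by omega
        rw [e, altA_period A h2 i j m hm hrel]
        exact ih (t - 2*m) (by omega)

/-- the key rank-2 dichotomy -/
lemma diamond (hij : i ≠ j) (hle : ∀ p q : Fin n, p ≠ q → A p q ≤ 0)
    (hzero : ∀ p q : Fin n, A p q = 0 ↔ A q p = 0) (r : ℕ) :
    (0 ≤ (XY (-A i j) (-A j i) r).1 ∧ 0 ≤ (XY (-A i j) (-A j i) r).2) ∨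
      len2 A h2 i j (altA A h2 i j (r+1)) ≤ r := by
  have ha : 0 ≤ -A i j := by have := hle i j hij; omega
  have hb : 0 ≤ -A j i := by have := hle j i (Ne.symm hij); omega
  set a := -A i j with hadef
  set b := -A j i with hbdef
  by_cases h4 : 4 ≤ a * b
  · have ha1 : 1 ≤ a := by
      by_contra hc
      push_neg at hc
      have h0 : a = 0 := by omega
      rw [h0, zero_mul] at h4
      omega
    have hb1 : 1 ≤ b := by
      by_contra hc
      push_neg at hc
      have h0 : b = 0 := by omega
      rw [h0, mul_zero] at h4
      omega
    exact Or.inl ((XY_pos_of_big a b ha1 hb1 h4 r).1)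
  · push_neg at h4
    have hab0 : a * b ≤ 3 := by omega
    have habnn : 0 ≤ a * b := mul_nonneg ha hb
    -- enumerate the finite cases
    have hcases : (a = 0 ∧ b = 0) ∨ (a = 1 ∧ b = 1) ∨ (a = 1 ∧ b = 2) ∨ (a = 2 ∧ b = 1) ∨
        (a = 1 ∧ b = 3) ∨ (a = 3 ∧ b = 1) := by
      rcases eq_or_lt_of_le ha with h0 | h0
      · left
        constructor
        · omega
        · have : A i j = 0 := by omega
          have := (hzero i j).1 this
          omega
      · have hb0 : 1 ≤ b := by
          rcases eq_or_lt_of_le hb with h | h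
          · exfalso
            have : A j i = 0 := by omega
            have := (hzero j i).1 this
            omega
          · omega
        have ha3 : a ≤ 3 := by nlinarith
        have hb3 : b ≤ 3 := by nlinarith
        have ha1 : 1 ≤ a := h0
        interval_cases a <;> interval_cases b <;> omega
    -- a helper: conclude from a relation at level m
    have key : ∀ m : ℕ, 1 ≤ m → altA A h2 i j m = altB A h2 i j m →
        (∀ r' : ℕ, r' < m → 0 ≤ (XY a b r').1 ∧ 0 ≤ (XY a b r').2) →
        (0 ≤ (XY a b r).1 ∧ 0 ≤ (XY a b r).2) ∨
          len2 A h2 i j (altA A h2 i j (r+1)) ≤ r := by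
      intro m hm hrel hXY
      by_cases hr : r < m
      · exact Or.inl (hXY r hr)
      · right
        exact le_trans (len2_altA_le_m A h2 i j m hm hrel (r+1)) (by omega)
    rcases hcases with ⟨ha', hb'⟩ | ⟨ha', hb'⟩ | ⟨ha', hb'⟩ | ⟨ha', hb'⟩ | ⟨ha', hb'⟩ | ⟨ha', hb'⟩
    · refine key 2 (by omega) (rel_m2 A h2 i j (by omega) (by omega)) ?_
      intro r' hr'
      interval_cases r' <;> rw [ha', hb'] <;> norm_num [XY]
    · refine key 3 (by omega) (rel_m3 A h2 i j (by omega) (by omega)) ?_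
      intro r' hr'
      interval_cases r' <;> rw [ha', hb'] <;> norm_num [XY]
    · refine key 4 (by omega) (rel_m4 A h2 i j (by omega) (by omega)) ?_
      intro r' hr'
      interval_cases r' <;> rw [ha', hb'] <;> norm_num [XY]
    · refine key 4 (by omega) (rel_m4' A h2 i j (by omega) (by omega)) ?_
      intro r' hr'
      interval_cases r' <;> rw [ha', hb'] <;> norm_num [XY]
    · refine key 6 (by omega) (rel_m6 A h2 i j (by omega) (by omega)) ?_
      intro r' hr'
      interval_cases r' <;> rw [ha', hb'] <;> norm_num [XY]
    · refine key 6 (by omega) (rel_m6' A h2 i j (by omega) (by omega)) ?_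
      intro r' hr'
      interval_cases r' <;> rw [ha', hb'] <;> norm_num [XY]

/-- THE rank-2 key lemma -/
lemma rank2_key (hij : i ≠ j) (hle : ∀ p q : Fin n, p ≠ q → A p q ≤ 0)
    (hzero : ∀ p q : Fin n, A p q = 0 ↔ A q p = 0)
    (v : (Fin n → ℤ) ≃ₗ[ℤ] (Fin n → ℤ)) (hv : v ∈ pairW A h2 i j)
    (hlt : len2 A h2 i j v < len2 A h2 i j (v * s A h2 i)) :
    ∃ x y : ℤ, 0 ≤ x ∧ 0 ≤ y ∧
      v (Pi.single i (1:ℤ)) = x • Pi.single i 1 + y • Pi.single j 1 := by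
  rcases pair_rep A h2 i j v hv with hrep | hrep
  · -- v = altA (len2 v)
    rcases Nat.eq_zero_or_pos (len2 A h2 i j v) with h0 | h0
    · rw [h0, altA_zero] at hrep
      refine ⟨1, 0, by norm_num, by norm_num, ?_⟩
      rw [hrep]
      have h1 : (1 : (Fin n → ℤ) ≃ₗ[ℤ] (Fin n → ℤ)) (Pi.single i (1:ℤ)) = Pi.single i 1 := rfl
      rw [h1]
      norm_num
    · exfalso
      obtain ⟨t, ht⟩ : ∃ t, len2 A h2 i j v = t + 1 := ⟨len2 A h2 i j v - 1, by omega⟩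
      rw [ht] at hrep
      have : v * s A h2 i = altB A h2 i j t := by rw [hrep, altA_mul_s_i]
      have hb := len2_altB_le A h2 i j t
      rw [← this] at hb
      omega
  · -- v = altB (len2 v)
    obtain ⟨t, ht⟩ : ∃ t, len2 A h2 i j v = t := ⟨_, rfl⟩
    rw [ht] at hrep
    rcases diamond A h2 i j hij hle hzero t with ⟨hx, hy⟩ | hlen
    · refine ⟨_, _, hx, hy, ?_⟩
      rw [hrep]
      exact altB_apply A h2 i j t
    · exfalso
      have hv' : v * s A h2 i = altA A h2 i j (t+1) := by
        rw [hrep, (alt_mul_succ A h2 i j t).1]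
      rw [← hv'] at hlen
      omega

end Rank2
section MainL1

variable (A : Matrix (Fin n) (Fin n) ℤ) (h2 : ∀ i, A i i = 2)

lemma s_ne_one (k : Fin n) : s A h2 k ≠ 1 := by
  intro h
  have h1 : s A h2 k (Pi.single k 1) = Pi.single k 1 := by rw [h]; rfl
  rw [s_apply] at h1
  have h2' : A.mulVec (Pi.single k (1:ℤ)) k = 2 := by
    simp [Matrix.mulVec_single, h2 k]
  rw [h2'] at h1
  have := congrFun h1 k
  simp at this

lemma len2_s (i j : Fin n) (k : Fin n) (hk : k = i ∨ k = j) :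
    len2 A h2 i j (s A h2 k) = 1 := by
  have hle1 : len2 A h2 i j (s A h2 k) ≤ 1 := by
    have := len2_le_word A h2 i j (s A h2 k) [k]
      (by intro x hx; simp at hx; rw [hx]; exact hk) (wp_singleton A h2 k).symm
    simpa using this
  rcases Nat.eq_zero_or_pos (len2 A h2 i j (s A h2 k)) with h0 | h0
  · exfalso
    exact s_ne_one A h2 k
      (len2_eq_zero A h2 i j (s A h2 k) (s_mem_pairW A h2 i j k hk) h0)
  · omega

/-- The fundamental positivity theorem (Humphreys 5.4 style):
if `len (w * s i) > len w` then `w e_i ≥ 0`. -/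
theorem we_pos (hle : ∀ p q : Fin n, p ≠ q → A p q ≤ 0)
    (hzero : ∀ p q : Fin n, A p q = 0 ↔ A q p = 0) :
    ∀ N : ℕ, ∀ w ∈ weyl A h2, len A h2 w = N → ∀ i : Fin n,
      len A h2 w < len A h2 (w * s A h2 i) → ∀ k, 0 ≤ w (Pi.single i (1:ℤ)) k := by
  intro N
  induction N using Nat.strong_induction_on with
  | _ N IH =>
    intro w hw hN i hlen k
    rcases Nat.eq_zero_or_pos N with rfl | hpos
    · rw [eq_one_of_len_zero A h2 w hw hN]
      have h1 : (1 : (Fin n → ℤ) ≃ₗ[ℤ] (Fin n → ℤ)) (Pi.single i (1:ℤ)) = Pi.single i 1 := rfl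
      rw [h1, Pi.single_apply]
      split <;> norm_num
    · obtain ⟨u₀, j, hu₀W, hww, hlenu₀⟩ := exists_peel A h2 w hw (by omega)
      have hij : i ≠ j := by
        rintro rfl
        have he : w * s A h2 i = u₀ := by rw [hww, mul_assoc, s_mul_self, mul_one]
        rw [he] at hlen
        omega
      have hwsj : w * s A h2 j = u₀ := by rw [hww, mul_assoc, s_mul_self, mul_one]
      set T : Set ℕ := {t | ∃ v, v ∈ pairW A h2 i j ∧ len2 A h2 i j v = t ∧
        len A h2 w = len A h2 (w * v⁻¹) + t} with hT
      have hT1 : 1 ∈ T := by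
        refine ⟨s A h2 j, s_mem_pairW A h2 i j j (Or.inr rfl), len2_s A h2 i j j (Or.inr rfl), ?_⟩
        rw [s_inv, hwsj]
        omega
      have hbdd : BddAbove T := by
        refine ⟨len A h2 w, fun t ht => ?_⟩
        obtain ⟨v, -, -, hveq⟩ := ht
        omega
      obtain ⟨v, hvP, hvlen, hveq⟩ := Nat.sSup_mem ⟨1, hT1⟩ hbdd
      have ht₀1 : 1 ≤ sSup T := le_csSup hbdd hT1
      have hvW : v ∈ weyl A h2 := pairW_le_weyl A h2 i j hvP
      have huW : w * v⁻¹ ∈ weyl A h2 := Subgroup.mul_mem _ hw (Subgroup.inv_mem _ hvW)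
      have hwuv : w = (w * v⁻¹) * v := by group
      -- claim (1): the minimal coset representative goes up with both s i and s j
      have hclaim : ∀ p : Fin n, p = i ∨ p = j →
          len A h2 (w * v⁻¹) < len A h2 ((w * v⁻¹) * s A h2 p) := by
        intro p hp
        by_contra hc
        push_neg at hc
        have hne := len_mul_s_ne A h2 (w * v⁻¹) huW p
        have hms := len_mul_s A h2 (w * v⁻¹) huW p
        have hlt : len A h2 ((w * v⁻¹) * s A h2 p) + 1 = len A h2 (w * v⁻¹) := by omega
        have hv'P : s A h2 p * v ∈ pairW A h2 i j :=
          Subgroup.mul_mem _ (s_mem_pairW A h2 i j p hp) hvP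
        have hv'W : s A h2 p * v ∈ weyl A h2 := pairW_le_weyl A h2 i j hv'P
        have hv'inv : (s A h2 p * v)⁻¹ = v⁻¹ * s A h2 p := by
          rw [_root_.mul_inv_rev, s_inv]
        have heq : w * (s A h2 p * v)⁻¹ = (w * v⁻¹) * s A h2 p := by
          rw [hv'inv, mul_assoc]
        have hlen2v' : len2 A h2 i j (s A h2 p * v) ≤ sSup T + 1 := by
          have := len2_s_mul_le A h2 i j v hvP p hp
          omega
        have hwle : len A h2 w ≤ len A h2 (w * (s A h2 p * v)⁻¹) +
            len2 A h2 i j (s A h2 p * v) := by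
          have e : w = (w * (s A h2 p * v)⁻¹) * (s A h2 p * v) := by group
          have h5 : w * (s A h2 p * v)⁻¹ ∈ weyl A h2 :=
            Subgroup.mul_mem _ hw (Subgroup.inv_mem _ hv'W)
          calc len A h2 w = len A h2 ((w * (s A h2 p * v)⁻¹) * (s A h2 p * v)) := by rw [← e]
            _ ≤ len A h2 (w * (s A h2 p * v)⁻¹) + len A h2 (s A h2 p * v) :=
              len_mul_le A h2 _ _ h5 hv'W
            _ ≤ len A h2 (w * (s A h2 p * v)⁻¹) + len2 A h2 i j (s A h2 p * v) := by
              have := len_le_len2 A h2 i j (s A h2 p * v) hv'P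
              omega
        rw [heq] at hwle
        have hmem : sSup T + 1 ∈ T := by
          refine ⟨s A h2 p * v, hv'P, by omega, by rw [heq]; omega⟩
        have := le_csSup hbdd hmem
        omega
      -- claim (2): len (w * v⁻¹) < N
      have hulen : len A h2 (w * v⁻¹) + sSup T = N := by omega
      have hultN : len A h2 (w * v⁻¹) < N := by omega
      -- induction hypothesis applied to u := w * v⁻¹
      have hui : ∀ k, 0 ≤ (w * v⁻¹) (Pi.single i (1:ℤ)) k :=
        IH (len A h2 (w * v⁻¹)) (by omega) (w * v⁻¹) huW rfl i (hclaim i (Or.inl rfl))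
      have huj : ∀ k, 0 ≤ (w * v⁻¹) (Pi.single j (1:ℤ)) k :=
        IH (len A h2 (w * v⁻¹)) (by omega) (w * v⁻¹) huW rfl j (hclaim j (Or.inr rfl))
      -- claim (3)
      have h3 : len2 A h2 i j v < len2 A h2 i j (v * s A h2 i) := by
        by_contra hc
        push_neg at hc
        have hvsP : v * s A h2 i ∈ pairW A h2 i j :=
          Subgroup.mul_mem _ hvP (s_mem_pairW A h2 i j i (Or.inl rfl))
        have hvsW : v * s A h2 i ∈ weyl A h2 := pairW_le_weyl A h2 i j hvsP
        have heq2 : w * s A h2 i = (w * v⁻¹) * (v * s A h2 i) := by group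
        have : len A h2 (w * s A h2 i) ≤ len A h2 (w * v⁻¹) + len2 A h2 i j (v * s A h2 i) := by
          calc len A h2 (w * s A h2 i) = len A h2 ((w * v⁻¹) * (v * s A h2 i)) := by rw [← heq2]
            _ ≤ len A h2 (w * v⁻¹) + len A h2 (v * s A h2 i) := len_mul_le A h2 _ _ huW hvsW
            _ ≤ len A h2 (w * v⁻¹) + len2 A h2 i j (v * s A h2 i) := by
              have := len_le_len2 A h2 i j (v * s A h2 i) hvsP
              omega
        omega
      obtain ⟨x, y, hx, hy, hxy⟩ := rank2_key A h2 i j hij hle hzero v hvP h3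
      rw [hwuv, equiv_mul_apply, hxy, map_add, _root_.map_smul, _root_.map_smul]
      simp only [Pi.add_apply, Pi.smul_apply, smul_eq_mul]
      exact add_nonneg (mul_nonneg hx (hui k)) (mul_nonneg hy (huj k))

end MainL1
section Derived

variable (A : Matrix (Fin n) (Fin n) ℤ) (h2 : ∀ i, A i i = 2)

lemma w_single_ne_zero (w : (Fin n → ℤ) ≃ₗ[ℤ] (Fin n → ℤ)) (p : Fin n) :
    w (Pi.single p (1:ℤ)) ≠ 0 := by
  intro h
  have h1 : Pi.single p (1:ℤ) = (0 : Fin n → ℤ) := by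
    have := congrArg w.symm h
    simpa using this
  have := congrFun h1 p
  simp at this

lemma s_single_self (q : Fin n) :
    s A h2 q (Pi.single q (1:ℤ)) = -Pi.single q 1 := by
  rw [s_apply]
  have h1 : A.mulVec (Pi.single q (1:ℤ)) q = 2 := by
    simp [Matrix.mulVec_single, h2 q]
  rw [h1]
  module

lemma we_neg (hle : ∀ p q : Fin n, p ≠ q → A p q ≤ 0)
    (hzero : ∀ p q : Fin n, A p q = 0 ↔ A q p = 0) (w : (Fin n → ℤ) ≃ₗ[ℤ] (Fin n → ℤ)) (hw : w ∈ weyl A h2) (i : Fin n)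
    (hlen : len A h2 (w * s A h2 i) < len A h2 w) :
    ∀ k, w (Pi.single i (1:ℤ)) k ≤ 0 := by
  intro k
  have hWsi : w * s A h2 i ∈ weyl A h2 := Subgroup.mul_mem _ hw (s_mem A h2 i)
  have he : (w * s A h2 i) * s A h2 i = w := by rw [mul_assoc, s_mul_self, mul_one]
  have hlt : len A h2 (w * s A h2 i) < len A h2 ((w * s A h2 i) * s A h2 i) := by
    rw [he]; exact hlen
  have hpos := we_pos A h2 hle hzero (len A h2 (w * s A h2 i)) (w * s A h2 i) hWsi rfl i hlt k
  have he2 : (w * s A h2 i) (Pi.single i (1:ℤ)) = -(w (Pi.single i 1)) := by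
    rw [equiv_mul_apply, s_single_self A h2 i, map_neg]
  rw [he2] at hpos
  simp only [Pi.neg_apply] at hpos
  omega

lemma dichotomy (hle : ∀ p q : Fin n, p ≠ q → A p q ≤ 0)
    (hzero : ∀ p q : Fin n, A p q = 0 ↔ A q p = 0) (w : (Fin n → ℤ) ≃ₗ[ℤ] (Fin n → ℤ)) (hw : w ∈ weyl A h2) (i : Fin n) :
    (∀ k, 0 ≤ w (Pi.single i (1:ℤ)) k) ∨ (∀ k, w (Pi.single i (1:ℤ)) k ≤ 0) := by
  rcases len_mul_s A h2 w hw i with h | h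
  · exact Or.inl (we_pos A h2 hle hzero (len A h2 w) w hw rfl i (by omega))
  · exact Or.inr (we_neg A h2 hle hzero w hw i (by omega))

/-- once a positive real root goes negative under `v`, it stays negative under `u * v`
whenever lengths add -/
lemma once_neg (hle : ∀ p q : Fin n, p ≠ q → A p q ≤ 0)
    (hzero : ∀ p q : Fin n, A p q = 0 ↔ A q p = 0) : ∀ (m : ℕ) (v : (Fin n → ℤ) ≃ₗ[ℤ] (Fin n → ℤ)), v ∈ weyl A h2 →
    len A h2 v = m → ∀ u ∈ weyl A h2, len A h2 (u * v) = len A h2 u + m →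
    ∀ g ∈ weyl A h2, ∀ p : Fin n, (∀ k, 0 ≤ g (Pi.single p (1:ℤ)) k) →
    (∀ k, v (g (Pi.single p (1:ℤ))) k ≤ 0) →
    ∀ k, (u * v) (g (Pi.single p (1:ℤ))) k ≤ 0 := by
  intro m
  induction m using Nat.strong_induction_on with
  | _ m IHm =>
    intro v hvW hvlen u huW hadd g hgW p hgpos hneg k
    rcases Nat.eq_zero_or_pos m with rfl | hpos
    · exfalso
      rw [eq_one_of_len_zero A h2 v hvW hvlen] at hneg
      have hzero' : g (Pi.single p (1:ℤ)) = 0 := by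
        funext t
        have h1 := hgpos t
        have h0 : (1 : (Fin n → ℤ) ≃ₗ[ℤ] (Fin n → ℤ)) (g (Pi.single p (1:ℤ))) =
          g (Pi.single p (1:ℤ)) := rfl
        have h2' := hneg t
        rw [h0] at h2'
        simp only [Pi.zero_apply]
        omega
      exact w_single_ne_zero g p hzero'
    · obtain ⟨v'', q, hv''W, hveq, hv''len⟩ := exists_peel A h2 v hvW (by omega)
      have huv''W : u * v'' ∈ weyl A h2 := Subgroup.mul_mem _ huW hv''W
      have huvW : u * v ∈ weyl A h2 := Subgroup.mul_mem _ huW hvW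
      have he : u * v = (u * v'') * s A h2 q := by rw [hveq, mul_assoc]
      have hadd'' : len A h2 (u * v'') = len A h2 u + (m - 1) := by
        have h1 : len A h2 (u * v'') ≤ len A h2 u + len A h2 v'' :=
          len_mul_le A h2 u v'' huW hv''W
        have h2' := len_mul_s A h2 (u * v'') huv''W q
        rw [← he] at h2'
        omega
      set β := g (Pi.single p (1:ℤ)) with hβ
      rcases dichotomy A h2 hle hzero (s A h2 q * g)
          (Subgroup.mul_mem _ (s_mem A h2 q) hgW) p with hpos' | hneg'
      · -- γ := s q β  is a nonnegative real root vector
        have hstep : ∀ k', (u * v) β k' = (u * v'') ((s A h2 q * g) (Pi.single p (1:ℤ))) k' := by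
          intro k'
          rw [he]
          rfl
        rw [hstep k]
        apply IHm (m-1) (by omega) v'' hv''W (by omega) u huW (by omega)
          (s A h2 q * g) (Subgroup.mul_mem _ (s_mem A h2 q) hgW) p hpos'
        intro k'
        have : v'' ((s A h2 q * g) (Pi.single p (1:ℤ))) k' = v β k' := by
          rw [hveq]
          rfl
        rw [this]
        exact hneg k'
      · -- then β = e_q
        have hcoord : ∀ t, t ≠ q → β t = 0 := by
          intro t htq
          have h1 := hgpos t
          have h2' := hneg' t
          have he2 : (s A h2 q * g) (Pi.single p (1:ℤ)) t = β t := by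
            have e3 : (s A h2 q * g) (Pi.single p (1:ℤ)) = s A h2 q β := rfl
            rw [e3, s_apply]
            simp [Pi.single_eq_of_ne htq]
          rw [he2] at h2'
          omega
        have hc0nonneg : 0 ≤ β q := hgpos q
        have hβc : β = β q • Pi.single q (1:ℤ) := by
          funext t
          rcases eq_or_ne t q with rfl | ht
          · simp
          · rw [hcoord t ht]
            simp [Pi.single_eq_of_ne ht]
        have hsingle : Pi.single p (1:ℤ) = β q • g.symm (Pi.single q (1:ℤ)) := by
          have e4 := congrArg g.symm hβc
          rw [_root_.map_smul] at e4
          rw [← e4, hβ, LinearEquiv.symm_apply_apply]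
        have hprim : β q * (g.symm (Pi.single q (1:ℤ)) p) = 1 := by
          have e5 := congrFun hsingle p
          simp only [Pi.single_eq_same, Pi.smul_apply, smul_eq_mul] at e5
          omega
        have hc1 : β q = 1 := by
          rcases Int.mul_eq_one_iff_eq_one_or_neg_one.1 hprim with ⟨h, -⟩ | ⟨h, -⟩
          · exact h
          · omega
        have hβq : β = Pi.single q (1:ℤ) := by
          rw [hβc, hc1, one_smul]
        have hfinal : (u * v) β k = -((u * v'') (Pi.single q (1:ℤ)) k) := by
          rw [he]
          have e6 : ((u * v'') * s A h2 q) β = (u * v'') (s A h2 q β) := rfl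
          rw [e6, hβq, s_single_self A h2 q, map_neg]
          simp
        rw [hfinal]
        have hup : 0 ≤ (u * v'') (Pi.single q (1:ℤ)) k := by
          apply we_pos A h2 hle hzero (len A h2 (u * v'')) (u * v'') huv''W rfl q ?_ k
          rw [← he]
          omega
        omega

/-- elements of the Weyl group only increase vectors in the fundamental region -/
lemma wk_ge (hle : ∀ p q : Fin n, p ≠ q → A p q ≤ 0)
    (hzero : ∀ p q : Fin n, A p q = 0 ↔ A q p = 0) :
    ∀ (N : ℕ) (w : (Fin n → ℤ) ≃ₗ[ℤ] (Fin n → ℤ)), w ∈ weyl A h2 → len A h2 w = N →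
    ∀ κ : Fin n → ℤ, (∀ t, 0 ≤ κ t) → (∀ t, A.mulVec κ t ≤ 0) →
    ∀ t, κ t ≤ w κ t := by
  intro N
  induction N using Nat.strong_induction_on with
  | _ N IHN =>
    intro w hwW hwlen κ hκpos hκneg t
    rcases Nat.eq_zero_or_pos N with rfl | hpos
    · rw [eq_one_of_len_zero A h2 w hwW hwlen]
      exact le_refl _
    · obtain ⟨w', q, hw'W, hveq, hw'len⟩ := exists_peel A h2 w hwW (by omega)
      have hsq : w κ = w' κ - (A.mulVec κ q) • w' (Pi.single q (1:ℤ)) := by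
        rw [hveq]
        have e1 : (w' * s A h2 q) κ = w' (s A h2 q κ) := rfl
        rw [e1, s_apply, map_sub, _root_.map_smul]
      have hup : 0 ≤ w' (Pi.single q (1:ℤ)) t := by
        apply we_pos A h2 hle hzero (len A h2 w') w' hw'W rfl q ?_ t
        have e2 : w' * s A h2 q = w := hveq.symm
        rw [e2]
        omega
      have hIH : κ t ≤ w' κ t := IHN (len A h2 w') (by omega) w' hw'W rfl κ hκpos hκneg t
      have : w κ t = w' κ t - (A.mulVec κ q) * (w' (Pi.single q (1:ℤ)) t) := by
        rw [hsq]
        simp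
      rw [this]
      have hc := hκneg q
      nlinarith

end Derived
section Roots

variable (A : Matrix (Fin n) (Fin n) ℤ) (h2 : ∀ i, A i i = 2)
  (hle : ∀ p q : Fin n, p ≠ q → A p q ≤ 0)
  (hzero : ∀ p q : Fin n, A p q = 0 ↔ A q p = 0)

lemma pos_mem_posRoots (w : (Fin n → ℤ) ≃ₗ[ℤ] (Fin n → ℤ)) (hw : w ∈ weyl A h2) (p : Fin n)
    (hpos : ∀ k, 0 ≤ w (Pi.single p (1:ℤ)) k) :
    w (Pi.single p (1:ℤ)) ∈ posRoots A h2 hzero :=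
  ⟨Or.inl (Or.inl ⟨w, hw, p, rfl⟩), ⟨w_single_ne_zero w p, hpos⟩⟩

lemma neg_mem_negRoots (w : (Fin n → ℤ) ≃ₗ[ℤ] (Fin n → ℤ)) (hw : w ∈ weyl A h2) (p : Fin n)
    (hneg : ∀ k, w (Pi.single p (1:ℤ)) k ≤ 0) :
    w (Pi.single p (1:ℤ)) ∈ negRoots A h2 hzero := by
  rw [negRoots, Set.mem_neg]
  have e : -(w (Pi.single p (1:ℤ))) = (w * s A h2 p) (Pi.single p (1:ℤ)) := by
    rw [equiv_mul_apply, s_single_self A h2 p, map_neg]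
  rw [e]
  apply pos_mem_posRoots A h2 hzero (w * s A h2 p) (Subgroup.mul_mem _ hw (s_mem A h2 p)) p
  intro k
  rw [← e]
  simp only [Pi.neg_apply]
  have := hneg k
  omega

lemma negRoots_coords (x : Fin n → ℤ) (hx : x ∈ negRoots A h2 hzero) :
    ∀ k, x k ≤ 0 := by
  rw [negRoots, Set.mem_neg] at hx
  obtain ⟨-, -, hpos⟩ := hx
  intro k
  have := hpos k
  simp only [Pi.neg_apply] at this
  omega

lemma pos_neg_disjoint (x : Fin n → ℤ) (hp : x ∈ posRoots A h2 hzero)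
    (hn : x ∈ negRoots A h2 hzero) : False := by
  obtain ⟨-, hne, hpos⟩ := hp
  have hneg := negRoots_coords A h2 hzero x hn
  apply hne
  funext t
  have := hpos t
  have := hneg t
  simp only [Pi.zero_apply]
  omega

end Roots

/-- if `A` is indecomposable with infinite Weyl group, `ω ∈ W` satisfies
`ℓ(ω^l) = |l|·ℓ(ω)` for all `l ∈ ℤ`, and `α ∈ Δ₊`, then the sign of `ω^k α` is a monotonic
function of `k ∈ ℤ`. -/
theorem sign_monotonic_of_straight (n : ℕ) (hn : 1 ≤ n) (A : Matrix (Fin n) (Fin n) ℤ)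
    (hA : IsGCM A) (hInd : Indecomposable A hA.2.2)
    (hWinf : Infinite (weyl A hA.1))
    (ω : (Fin n → ℤ) ≃ₗ[ℤ] (Fin n → ℤ)) (hω : ω ∈ weyl A hA.1)
    (hlen : ∀ l : ℤ, len A hA.1 (ω ^ l) = l.natAbs * len A hA.1 ω)
    (α : Fin n → ℤ) (hα : α ∈ posRoots A hA.1 hA.2.2) :
    (∀ k l : ℤ, k ≤ l → (ω ^ k) α ∈ negRoots A hA.1 hA.2.2 →
        (ω ^ l) α ∈ negRoots A hA.1 hA.2.2) ∨
      (∀ k l : ℤ, k ≤ l → (ω ^ k) α ∈ posRoots A hA.1 hA.2.2 →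
        (ω ^ l) α ∈ posRoots A hA.1 hA.2.2) := by
  obtain ⟨h2, hle, hzero⟩ := hA
  obtain ⟨hroots, hαne, hαpos⟩ := hα
  rcases hroots with hre | hmin
  rcases hre with ⟨g, hgW, p, rfl⟩ | ⟨g, hgW, κ, hκK, rfl⟩
  · -- REAL CASE : α = g (e p)
    -- basic facts
    have hzw : ∀ z : ℤ, ω ^ z ∈ weyl A h2 := fun z => Subgroup.zpow_mem _ hω z
    have hzgW : ∀ z : ℤ, ω ^ z * g ∈ weyl A h2 := fun z => Subgroup.mul_mem _ (hzw z) hgW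
    have hcomb : ∀ z₁ z₂ : ℤ, ω ^ z₁ * ω ^ z₂ = ω ^ (z₁ + z₂) := fun z₁ z₂ =>
      (zpow_add ω z₁ z₂).symm
    have happ : ∀ (z : ℤ) (x : Fin n → ℤ), (ω ^ z) ((g) x) = (ω ^ z * g) x := fun z x => rfl
    have hlenadd : ∀ z₁ z₂ : ℤ, z₁.natAbs + z₂.natAbs = (z₁ + z₂).natAbs →
        len A h2 (ω ^ (z₁ + z₂)) = len A h2 (ω ^ z₁) + len A h2 (ω ^ z₂) := by
      intro z₁ z₂ habs
      rw [hlen, hlen, hlen, ← habs, add_mul]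
    -- sign extraction
    have f2 : ∀ z : ℤ, (ω ^ z) (g (Pi.single p (1:ℤ))) ∈ negRoots A h2 hzero →
        ∀ t, (ω ^ z) (g (Pi.single p (1:ℤ))) t ≤ 0 := fun z hz =>
      negRoots_coords A h2 hzero _ hz
    have f3 : ∀ z : ℤ, (∀ t, (ω ^ z) (g (Pi.single p (1:ℤ))) t ≤ 0) →
        (ω ^ z) (g (Pi.single p (1:ℤ))) ∈ negRoots A h2 hzero := by
      intro z hz
      have := neg_mem_negRoots A h2 hzero (ω ^ z * g) (hzgW z) p (fun t => by
        rw [← happ z]; exact hz t)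
      rw [← happ z] at this
      exact this
    have f4 : ∀ z : ℤ, (∀ t, 0 ≤ (ω ^ z) (g (Pi.single p (1:ℤ))) t) →
        (ω ^ z) (g (Pi.single p (1:ℤ))) ∈ posRoots A h2 hzero := by
      intro z hz
      have := pos_mem_posRoots A h2 hzero (ω ^ z * g) (hzgW z) p (fun t => by
        rw [← happ z]; exact hz t)
      rw [← happ z] at this
      exact this
    have dich : ∀ z : ℤ, (ω ^ z) (g (Pi.single p (1:ℤ))) ∈ posRoots A h2 hzero ∨
        (ω ^ z) (g (Pi.single p (1:ℤ))) ∈ negRoots A h2 hzero := by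
      intro z
      rcases dichotomy A h2 hle hzero (ω ^ z * g) (hzgW z) p with h | h
      · exact Or.inl (f4 z (fun t => by rw [happ z]; exact h t))
      · exact Or.inr (f3 z (fun t => by rw [happ z]; exact h t))
    -- monotone step upward
    have stepup : ∀ k l : ℤ, 0 ≤ k → k ≤ l →
        (ω ^ k) (g (Pi.single p (1:ℤ))) ∈ negRoots A h2 hzero →
        (ω ^ l) (g (Pi.single p (1:ℤ))) ∈ negRoots A h2 hzero := by
      intro k l hk hkl hneg
      have he : ω ^ (l - k) * ω ^ k = ω ^ l := by rw [hcomb]; congr 1; ring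
      have hadd : len A h2 (ω ^ (l - k) * ω ^ k) = len A h2 (ω ^ (l - k)) + len A h2 (ω ^ k) := by
        have h := hlenadd (l - k) k (by omega)
        rw [show (l - k + k : ℤ) = l from by ring] at h
        rw [he]
        exact h
      have hconc := once_neg A h2 hle hzero (len A h2 (ω ^ k)) (ω ^ k) (hzw k) rfl
        (ω ^ (l - k)) (hzw (l - k)) hadd g hgW p hαpos (f2 k hneg)
      apply f3 l
      intro t
      have := hconc t
      rw [he] at this
      exact this
    -- monotone step downward (negative side)
    have stepdown : ∀ k l : ℤ, k ≤ l → l ≤ 0 →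
        (ω ^ l) (g (Pi.single p (1:ℤ))) ∈ negRoots A h2 hzero →
        (ω ^ k) (g (Pi.single p (1:ℤ))) ∈ negRoots A h2 hzero := by
      intro k l hkl hl hneg
      have he : ω ^ (k - l) * ω ^ l = ω ^ k := by rw [hcomb]; congr 1; ring
      have hadd : len A h2 (ω ^ (k - l) * ω ^ l) = len A h2 (ω ^ (k - l)) + len A h2 (ω ^ l) := by
        have h := hlenadd (k - l) l (by omega)
        rw [show (k - l + l : ℤ) = k from by ring] at h
        rw [he]
        exact h
      have hconc := once_neg A h2 hle hzero (len A h2 (ω ^ l)) (ω ^ l) (hzw l) rfl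
        (ω ^ (k - l)) (hzw (k - l)) hadd g hgW p hαpos (f2 l hneg)
      apply f3 k
      intro t
      have := hconc t
      rw [he] at this
      exact this
    -- crossing zero in both directions is impossible
    have cross : ∀ k₁ k₂ : ℤ, k₁ < 0 → 0 < k₂ →
        (ω ^ k₁) (g (Pi.single p (1:ℤ))) ∈ negRoots A h2 hzero →
        (ω ^ k₂) (g (Pi.single p (1:ℤ))) ∈ negRoots A h2 hzero → False := by
      intro k₁ k₂ hk₁ hk₂ hn₁ hn₂
      set g' := ω ^ k₁ * g * s A h2 p with hg'
      have hg'W : g' ∈ weyl A h2 := Subgroup.mul_mem _ (hzgW k₁) (s_mem A h2 p)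
      have hg'eq : g' (Pi.single p (1:ℤ)) = -((ω ^ k₁) (g (Pi.single p (1:ℤ)))) := by
        have e1 : g' (Pi.single p (1:ℤ)) = (ω ^ k₁) (g (s A h2 p (Pi.single p (1:ℤ)))) := rfl
        rw [e1, s_single_self A h2 p, map_neg, map_neg]
      have hg'pos : ∀ t, 0 ≤ g' (Pi.single p (1:ℤ)) t := by
        intro t
        rw [hg'eq]
        simp only [Pi.neg_apply]
        have := f2 k₁ hn₁ t
        omega
      have hcancel : ∀ z : ℤ, (ω ^ z) (g' (Pi.single p (1:ℤ))) =
          -((ω ^ (z + k₁)) (g (Pi.single p (1:ℤ)))) := by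
        intro z
        rw [hg'eq, map_neg]
        congr 1
        have e2 : (ω ^ z) ((ω ^ k₁) (g (Pi.single p (1:ℤ)))) =
            (ω ^ z * ω ^ k₁) (g (Pi.single p (1:ℤ))) := rfl
        rw [e2, hcomb]
      have he : ω ^ k₂ * ω ^ (-k₁) = ω ^ (k₂ - k₁) := by
        rw [hcomb, show (k₂ + -k₁ : ℤ) = k₂ - k₁ from by ring]
      have hadd : len A h2 (ω ^ k₂ * ω ^ (-k₁)) =
          len A h2 (ω ^ k₂) + len A h2 (ω ^ (-k₁)) := by
        have h := hlenadd k₂ (-k₁) (by omega)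
        rw [show (k₂ + -k₁ : ℤ) = k₂ - k₁ from by ring] at h
        rw [he]
        exact h
      have hneg' : ∀ t, (ω ^ (-k₁)) (g' (Pi.single p (1:ℤ))) t ≤ 0 := by
        intro t
        rw [hcancel (-k₁)]
        have e3 : -k₁ + k₁ = (0 : ℤ) := by ring
        rw [e3, zpow_zero]
        have e4 : (1 : (Fin n → ℤ) ≃ₗ[ℤ] (Fin n → ℤ)) (g (Pi.single p (1:ℤ))) =
          g (Pi.single p (1:ℤ)) := rfl
        rw [e4]
        simp only [Pi.neg_apply]
        have := hαpos t
        omega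
      have hconc := once_neg A h2 hle hzero (len A h2 (ω ^ (-k₁))) (ω ^ (-k₁)) (hzw (-k₁)) rfl
        (ω ^ k₂) (hzw k₂) hadd g' hg'W p hg'pos hneg'
      -- hconc : ∀ t, (ω ^ k₂ * ω ^ (-k₁)) (g' e_p) t ≤ 0
      have hk₂pos : ∀ t, 0 ≤ (ω ^ k₂) (g (Pi.single p (1:ℤ))) t := by
        intro t
        have h5 := hconc t
        have e6 : (ω ^ k₂ * ω ^ (-k₁)) (g' (Pi.single p (1:ℤ))) =
            (ω ^ (k₂ - k₁)) (g' (Pi.single p (1:ℤ))) := by rw [he]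
        rw [e6, hcancel (k₂ - k₁)] at h5
        have e7 : k₂ - k₁ + k₁ = k₂ := by ring
        rw [e7] at h5
        simp only [Pi.neg_apply] at h5
        omega
      have hk₂neg := f2 k₂ hn₂
      have : (ω ^ k₂) (g (Pi.single p (1:ℤ))) = 0 := by
        funext t
        have := hk₂pos t
        have := hk₂neg t
        simp only [Pi.zero_apply]
        omega
      have hα0 : g (Pi.single p (1:ℤ)) = 0 := by
        have := congrArg (ω ^ k₂).symm this
        simpa using this
      exact w_single_ne_zero g p hα0
    -- conclude
    by_cases hnegside : ∃ z : ℤ, z < 0 ∧ (ω ^ z) (g (Pi.single p (1:ℤ))) ∈ negRoots A h2 hzero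
    · obtain ⟨z₁, hz₁, hz₁n⟩ := hnegside
      by_cases hposside : ∃ z : ℤ, 0 < z ∧
          (ω ^ z) (g (Pi.single p (1:ℤ))) ∈ negRoots A h2 hzero
      · obtain ⟨z₂, hz₂, hz₂n⟩ := hposside
        exact absurd (cross z₁ z₂ hz₁ hz₂ hz₁n hz₂n) (fun h => h)
      · right
        intro k l hkl hk
        rcases dich l with h | h
        · exact h
        · exfalso
          have hl0 : l ≤ 0 := by
            by_contra hc
            push_neg at hc
            exact hposside ⟨l, hc, h⟩
          exact pos_neg_disjoint A h2 hzero _ hk (stepdown k l hkl hl0 h)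
    · left
      intro k l hkl hk
      have hk0 : (0:ℤ) ≤ k := by
        by_contra hc
        push_neg at hc
        exact hnegside ⟨k, hc, hk⟩
      exact stepup k l hk0 hkl hk
  · -- IMAGINARY CASE : α = g κ, always positive
    right
    intro k l hkl _
    obtain ⟨⟨hκne, hκpos⟩, hκconn, hκA⟩ := hκK
    have hgl : ω ^ l * g ∈ weyl A h2 :=
      Subgroup.mul_mem _ (Subgroup.zpow_mem _ hω l) hgW
    have happl : (ω ^ l) (g κ) = (ω ^ l * g) κ := rfl
    have hge : ∀ t, κ t ≤ (ω ^ l * g) κ t :=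
      wk_ge A h2 hle hzero (len A h2 (ω ^ l * g)) (ω ^ l * g) hgl rfl κ hκpos hκA
    obtain ⟨t₀, ht₀⟩ := Function.ne_iff.1 hκne
    simp only [Pi.zero_apply] at ht₀
    have ht₀pos : 0 < κ t₀ := by
      have := hκpos t₀
      omega
    refine ⟨Or.inl (Or.inr ⟨ω ^ l * g, hgl, κ, ⟨⟨hκne, hκpos⟩, hκconn, hκA⟩, happl⟩), ?_, ?_⟩
    · rw [happl]
      intro h0
      have := congrFun h0 t₀
      have := hge t₀
      simp only [Pi.zero_apply] at *
      omega
    · intro t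
      rw [happl]
      have := hge t
      have := hκpos t
      omega
  · -- α ∈ -(posImRoots) : impossible since α is positive
    exfalso
    rw [Set.mem_neg] at hmin
    obtain ⟨g, hgW, κ, hκK, hmeq⟩ := hmin
    obtain ⟨⟨hκne, hκpos⟩, -, hκA⟩ := hκK
    have hge : ∀ t, κ t ≤ g κ t :=
      wk_ge A h2 hle hzero (len A h2 g) g hgW rfl κ hκpos hκA
    apply hαne
    funext t
    have h1 := congrFun hmeq t
    simp only [Pi.neg_apply] at h1
    have h2' := hge t
    have h3 := hκpos t
    have h4 := hαpos t
    simp only [Pi.zero_apply]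
    omega

end KacMoodyPaper
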